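/- For every s ∈ ℂ with Re s > 1 and every η ≥ 1, the truncated Eisenstein series E^η(·,s) is square-integrable on the standard fundamental domain: ∫_𝒟 |E^η(z,s)|² · y^{−2} dx dy < ∞. -/

import Mathlib

open Complex MeasureTheory

/-- The level-one real-analytic Eisenstein series
`E(z,s) = (1/2) · Σ_{(c,d) ∈ ℤ², gcd(c,d)=1} (Im z)^s · (|cz+d|²)^(−s)`. -/
noncomputable def eisensteinE (z : ℂ) (s : ℂ) : ℂ :=
  (1 / 2) * ∑' p : {p : ℤ × ℤ // Int.gcd p.1 p.2 = 1},
    ((z.im : ℂ)) ^ s *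
      ((‖(p : ℤ × ℤ).1 * z + (p : ℤ × ℤ).2‖ ^ 2 : ℝ) : ℂ) ^ (-s)

/-- The scattering coefficient `φ(s) = √π · Γ(s - 1/2) · ζ(2s - 1) / (Γ(s) · ζ(2s))`. -/
noncomputable def scatteringPhi (s : ℂ) : ℂ :=
  (Real.sqrt Real.pi : ℂ) * Complex.Gamma (s - 1 / 2) * riemannZeta (2 * s - 1) /
    (Complex.Gamma s * riemannZeta (2 * s))

/-- The truncated Eisenstein series `E^η(z,s)`, obtained from `E(z,s)` by removing the constant
term `(Im z)^s + φ(s) (Im z)^{1-s}` above height `η`. -/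
noncomputable def eisensteinTrunc (η : ℝ) (z : ℂ) (s : ℂ) : ℂ :=
  eisensteinE z s -
    (if η < z.im then ((z.im : ℂ)) ^ s + scatteringPhi s * ((z.im : ℂ)) ^ (1 - s) else 0)

/-- The standard fundamental domain `𝒟 = {z ∈ ℍ : |Re z| ≤ 1/2, |z| ≥ 1}` for `SL(2, ℤ)`. -/
def fundamentalDomainSL2 : Set ℂ := {z : ℂ | 0 < z.im ∧ |z.re| ≤ 1 / 2 ∧ 1 ≤ ‖z‖}

noncomputable def g0 (σ : ℝ) (n : ℤ) : ℝ := (max 1 |(n : ℝ)|) ^ (-σ)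

lemma g0_nonneg (σ : ℝ) (n : ℤ) : 0 ≤ g0 σ n :=
  Real.rpow_nonneg (le_trans zero_le_one (le_max_left _ _)) _

lemma summable_g0 {σ : ℝ} (hσ : 1 < σ) : Summable (g0 σ) := by
  have h1 : Summable (fun n : ℤ => (if n = 0 then (1:ℝ) else 0) + |(n:ℝ)| ^ (-σ)) :=
    (summable_of_ne_finset_zero (s := {0}) (by intro n hn; simp at hn; simp [hn])).add
      (Real.summable_abs_int_rpow hσ)
  refine Summable.of_nonneg_of_le (fun n => g0_nonneg σ n) (fun n => ?_) h1
  by_cases hn : n = 0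
  · subst hn; simp only [g0]; simp only [Int.cast_zero, abs_zero]
    rw [max_eq_left zero_le_one, Real.one_rpow]
    have : (0:ℝ) ^ (-σ) = 0 := Real.zero_rpow (by linarith)
    simp [this]
  · have h2 : (1:ℝ) ≤ |(n:ℝ)| := by
      have := Int.one_le_abs hn
      exact_mod_cast (by exact_mod_cast this : (1:ℤ) ≤ |n|).trans_eq (by push_cast; rfl)
    simp [g0, hn, max_eq_right h2]

lemma summable_g0_prod {σ : ℝ} (hσ : 1 < σ) :
    Summable (fun p : ℤ × ℤ => g0 σ p.1 * g0 σ p.2) :=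
  (summable_g0 hσ).mul_of_nonneg (summable_g0 hσ) (fun n => g0_nonneg _ _)
    (fun n => g0_nonneg _ _)

lemma real_low {x y c d : ℝ} (hx : |x| ≤ 1/2) (hxy : 1 ≤ x^2 + y^2)
    (hc : c = 0 ∨ 1 ≤ |c|) (hd : d = 0 ∨ 1 ≤ |d|) (hcd : ¬(c = 0 ∧ d = 0)) :
    max 1 |c| * max 1 |d| / 2 ≤ (c*x + d)^2 + (c*y)^2 := by
  rcases hc with hc | hc
  · rcases hd with hd | hd
    · exact absurd ⟨hc, hd⟩ hcd
    · subst hc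
      rw [_root_.abs_zero, max_eq_left zero_le_one, max_eq_right hd]
      nlinarith [_root_.sq_abs d, sq_nonneg y]
  · rw [max_eq_right hc]
    have hcx : 1 ≤ c^2 := by nlinarith [_root_.sq_abs c]
    have hkey : c^2 * 1 ≤ c^2 * (x^2 + y^2) :=
      mul_le_mul_of_nonneg_left hxy (sq_nonneg c)
    rcases hd with hd | hd
    · subst hd
      rw [_root_.abs_zero, max_eq_left zero_le_one]
      nlinarith [_root_.sq_abs c]
    · rw [max_eq_right hd]
      have habs : |2*c*d*x| ≤ |c| * |d| := by
        rw [_root_.abs_mul, _root_.abs_mul, _root_.abs_mul, _root_.abs_two]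
        nlinarith [_root_.abs_nonneg c, _root_.abs_nonneg d, _root_.abs_nonneg x, mul_nonneg (_root_.abs_nonneg c) (_root_.abs_nonneg d)]
      have h2 : -(|c| * |d|) ≤ 2*c*d*x := neg_le_of_abs_le habs
      nlinarith [_root_.sq_abs c, _root_.sq_abs d, sq_nonneg (|c| - |d|), mul_nonneg (_root_.abs_nonneg c) (_root_.abs_nonneg d)]

lemma real_high {x y c d : ℝ} (hx : |x| ≤ 1/2) (hy : 1 ≤ y) (hc : 1 ≤ |c|)
    (hcase : |c| ≤ |d| ∨ max 1 |d| ≤ |c|) :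
    |c| * max 1 |d| * y ≤ (c*x + d)^2 + (c*y)^2 := by
  have hy0 : (0:ℝ) < y := lt_of_lt_of_le one_pos hy
  rcases hcase with hcd | hcd
  · have hd1 : (1:ℝ) ≤ |d| := le_trans hc hcd
    rw [max_eq_right hd1]
    have h1 : |d| - |c| * |x| ≤ |c*x + d| := by
      have := abs_add_le (c*x) d
      have h2 : |c*x| = |c| * |x| := _root_.abs_mul c x
      have h3 : |d| ≤ |c*x + d| + |c*x| := by
        calc |d| = |(c*x + d) + -(c*x)| := by ring_nf
        _ ≤ |c*x + d| + |-(c*x)| := abs_add_le _ _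
        _ = |c*x + d| + |c*x| := by rw [_root_.abs_neg]
      nlinarith
    have h4 : |d| / 2 ≤ |c*x + d| := by nlinarith [_root_.abs_nonneg c]
    have h5 : (c*x+d)^2 + (c*y)^2 ≥ 2 * |c*x+d| * |c*y| := by
      nlinarith [sq_nonneg (|c*x+d| - |c*y|), _root_.sq_abs (c*x+d), _root_.sq_abs (c*y)]
    have h6 : |c*y| = |c| * y := by rw [_root_.abs_mul, _root_.abs_of_pos hy0]
    nlinarith [_root_.abs_nonneg (c*x+d), mul_nonneg (_root_.abs_nonneg c) hy0.le, _root_.abs_nonneg d]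
  · have h1 : (c*y)^2 = (|c| * y)^2 := by rw [← _root_.sq_abs (c*y), _root_.abs_mul, _root_.abs_of_pos hy0]
    have h2 : |c| * max 1 |d| * y ≤ (|c| * y)*(|c| * y) := by
      have hm1 : (1:ℝ) ≤ max 1 |d| := le_max_left _ _
      nlinarith [mul_le_mul_of_nonneg_left hcd (mul_nonneg (_root_.abs_nonneg c) hy0.le),
        mul_le_mul_of_nonneg_left hy
          (mul_nonneg (mul_nonneg (_root_.abs_nonneg c) (_root_.abs_nonneg c)) hy0.le)]
    nlinarith [sq_nonneg (c*x+d)]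

lemma cz_add_d_ne_zero {c d : ℤ} {z : ℂ} (hz : 0 < z.im) (h : ¬(c = 0 ∧ d = 0)) :
    (c : ℂ) * z + (d : ℂ) ≠ 0 := by
  by_cases hc : c = 0
  · subst hc
    simp only [Int.cast_zero, zero_mul, zero_add, ne_eq, Int.cast_eq_zero]
    exact fun hd => h ⟨rfl, hd⟩
  · intro he
    have him : ((c : ℂ) * z + (d : ℂ)).im = (c : ℝ) * z.im := by simp
    rw [he] at him
    simp only [Complex.zero_im] at him
    rcases mul_eq_zero.mp him.symm with h1 | h1
    · exact hc (by exact_mod_cast h1)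
    · exact hz.ne' h1

lemma sq_abs_cz_add_d (c d : ℤ) (z : ℂ) :
    ‖(c : ℂ) * z + (d : ℂ)‖ ^ 2
      = ((c : ℝ) * z.re + (d : ℝ))^2 + ((c : ℝ) * z.im)^2 := by
  rw [Complex.sq_norm, Complex.normSq_apply]
  simp [Complex.add_re, Complex.add_im, Complex.mul_re, Complex.mul_im]
  ring

lemma int_abs_cases (c : ℤ) : (c : ℝ) = 0 ∨ 1 ≤ |(c : ℝ)| := by
  by_cases hc : c = 0
  · exact Or.inl (by exact_mod_cast hc)
  · right; rw [← Int.cast_abs]; exact_mod_cast Int.one_le_abs hc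

lemma bound_low {σ η : ℝ} (hσ : 0 < σ) (hη : 0 < η) {z : ℂ} (hz1 : 0 < z.im) (hx : |z.re| ≤ 1/2)
    (hz2 : 1 ≤ ‖z‖) (hyη : z.im ≤ η) {c d : ℤ} (hcd : Int.gcd c d = 1) :
    z.im ^ σ * (‖(c : ℂ) * z + (d : ℂ)‖ ^ 2) ^ (-σ)
      ≤ (2*η)^σ * (g0 σ c * g0 σ d) := by
  set a : ℝ := |(c : ℝ)| with ha
  set b : ℝ := |(d : ℝ)| with hb
  have hm : (0:ℝ) < max 1 a * max 1 b := by positivity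
  have hcd0 : ¬((c:ℝ) = 0 ∧ (d:ℝ) = 0) := by
    rintro ⟨h1, h2⟩
    have hc0 : c = 0 := by exact_mod_cast h1
    have hd0 : d = 0 := by exact_mod_cast h2
    subst hc0; subst hd0; simp at hcd
  have hxy : 1 ≤ z.re^2 + z.im^2 := by
    have h1 := Complex.sq_norm z
    rw [Complex.normSq_apply] at h1
    nlinarith [norm_nonneg z]
  have hA : max 1 a * max 1 b / 2 ≤ ‖(c : ℂ) * z + (d : ℂ)‖ ^ 2 := by
    rw [sq_abs_cz_add_d]
    exact real_low hx hxy (int_abs_cases c) (int_abs_cases d) hcd0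
  have h2 : (‖(c : ℂ) * z + (d : ℂ)‖ ^ 2) ^ (-σ) ≤ (max 1 a * max 1 b / 2) ^ (-σ) :=
    Real.rpow_le_rpow_of_nonpos (by positivity) hA (neg_nonpos.mpr hσ.le)
  have h3 : z.im ^ σ ≤ η ^ σ := Real.rpow_le_rpow hz1.le hyη hσ.le
  calc z.im ^ σ * (‖(c : ℂ) * z + (d : ℂ)‖ ^ 2) ^ (-σ)
      ≤ η ^ σ * (max 1 a * max 1 b / 2) ^ (-σ) :=
        mul_le_mul h3 h2 (Real.rpow_nonneg (by positivity) _) (Real.rpow_nonneg (by positivity) _)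
    _ = (2*η)^σ * (g0 σ c * g0 σ d) := by
        have e1 : ((max 1 a * max 1 b) / 2 : ℝ) ^ (-σ)
            = (max 1 a * max 1 b) ^ (-σ) * 2 ^ σ := by
          rw [Real.div_rpow hm.le (by norm_num : (0:ℝ) ≤ 2),
            Real.rpow_neg (by norm_num : (0:ℝ) ≤ 2) σ]
          rw [div_eq_mul_inv, inv_inv]
        have e2 : (max 1 a * max 1 b : ℝ) ^ (-σ) = (max 1 a) ^ (-σ) * (max 1 b) ^ (-σ) :=
          Real.mul_rpow (by positivity) (by positivity)
        have e3 : ((2*η : ℝ)) ^ σ = 2 ^ σ * η ^ σ :=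
          Real.mul_rpow (by norm_num) hη.le
        rw [e1, e2, e3]
        simp only [g0]
        ring

lemma bound_high {σ : ℝ} (hσ : 0 < σ) {z : ℂ} (hy : 1 ≤ z.im) (hx : |z.re| ≤ 1/2)
    {c d : ℤ} (hc : c ≠ 0) :
    z.im ^ σ * (‖(c : ℂ) * z + (d : ℂ)‖ ^ 2) ^ (-σ)
      ≤ g0 σ c * g0 σ d := by
  have hz1 : (0:ℝ) < z.im := lt_of_lt_of_le one_pos hy
  have hca : (1:ℝ) ≤ |(c:ℝ)| := by rw [← Int.cast_abs]; exact_mod_cast Int.one_le_abs hc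
  have hcase : |(c:ℝ)| ≤ |(d:ℝ)| ∨ max 1 |(d:ℝ)| ≤ |(c:ℝ)| := by
    rcases le_or_gt |c| |d| with h | h
    · left; rw [← Int.cast_abs, ← Int.cast_abs]; exact_mod_cast h
    · right
      refine max_le hca ?_
      rw [← Int.cast_abs, ← Int.cast_abs]; exact_mod_cast h.le
  have hB : (0:ℝ) < |(c:ℝ)| * max 1 |(d:ℝ)| * z.im := by positivity
  have hA : |(c:ℝ)| * max 1 |(d:ℝ)| * z.im ≤ ‖(c : ℂ) * z + (d : ℂ)‖ ^ 2 := by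
    rw [sq_abs_cz_add_d]
    exact real_high hx hy hca hcase
  have h2 : (‖(c : ℂ) * z + (d : ℂ)‖ ^ 2) ^ (-σ)
      ≤ (|(c:ℝ)| * max 1 |(d:ℝ)| * z.im) ^ (-σ) :=
    Real.rpow_le_rpow_of_nonpos hB hA (neg_nonpos.mpr hσ.le)
  have hmain : z.im ^ σ * (|(c:ℝ)| * max 1 |(d:ℝ)| * z.im) ^ (-σ) = g0 σ c * g0 σ d := by
    rw [Real.mul_rpow (by positivity) hz1.le, Real.mul_rpow (by positivity) (by positivity)]
    have hyy : z.im ^ σ * z.im ^ (-σ) = 1 := by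
      rw [← Real.rpow_add hz1, add_neg_cancel, Real.rpow_zero]
    have hc' : max 1 |(c:ℝ)| = |(c:ℝ)| := max_eq_right hca
    simp only [g0, hc']
    calc z.im ^ σ * (|(c:ℝ)| ^ (-σ) * max 1 |(d:ℝ)| ^ (-σ) * z.im ^ (-σ))
        = (z.im ^ σ * z.im ^ (-σ)) * (|(c:ℝ)| ^ (-σ) * max 1 |(d:ℝ)| ^ (-σ)) := by ring
      _ = |(c:ℝ)| ^ (-σ) * max 1 |(d:ℝ)| ^ (-σ) := by rw [hyy, one_mul]
  calc z.im ^ σ * (‖(c : ℂ) * z + (d : ℂ)‖ ^ 2) ^ (-σ)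
      ≤ z.im ^ σ * (|(c:ℝ)| * max 1 |(d:ℝ)| * z.im) ^ (-σ) :=
        mul_le_mul_of_nonneg_left h2 (Real.rpow_nonneg hz1.le _)
    _ = g0 σ c * g0 σ d := hmain

noncomputable def eisTerm (z s : ℂ) (p : ℤ × ℤ) : ℂ :=
  ((z.im : ℂ)) ^ s * ((‖(p.1 : ℂ) * z + (p.2 : ℂ)‖ ^ 2 : ℝ) : ℂ) ^ (-s)

lemma eisensteinE_eq (z s : ℂ) :
    eisensteinE z s
      = (1 / 2) * ∑' p : {p : ℤ × ℤ // Int.gcd p.1 p.2 = 1}, eisTerm z s p.val := rfl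

lemma coprime_ne_zero {p : ℤ × ℤ} (hp : Int.gcd p.1 p.2 = 1) : ¬(p.1 = 0 ∧ p.2 = 0) := by
  rintro ⟨h1, h2⟩
  rw [h1, h2] at hp
  simp at hp

lemma abs_eisTerm {z : ℂ} (hz : 0 < z.im) (s : ℂ) {p : ℤ × ℤ} (hp : ¬(p.1 = 0 ∧ p.2 = 0)) :
    ‖eisTerm z s p‖
      = z.im ^ s.re * (‖(p.1 : ℂ) * z + (p.2 : ℂ)‖ ^ 2) ^ (-s.re) := by
  have hne := cz_add_d_ne_zero hz hp
  have hpos : (0:ℝ) < ‖(p.1 : ℂ) * z + (p.2 : ℂ)‖ ^ 2 :=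
    pow_pos (norm_pos_iff.mpr hne) 2
  rw [eisTerm, norm_mul, Complex.norm_cpow_eq_rpow_re_of_pos hz,
    Complex.norm_cpow_eq_rpow_re_of_pos hpos, Complex.neg_re]

lemma abs_eisTerm_le_low {s : ℂ} (hs : 1 < s.re) {η : ℝ} (hη : 0 < η) {z : ℂ}
    (h𝒟 : z ∈ fundamentalDomainSL2) (hyη : z.im ≤ η)
    {p : ℤ × ℤ} (hp : Int.gcd p.1 p.2 = 1) :
    ‖eisTerm z s p‖ ≤ (2*η)^s.re * (g0 s.re p.1 * g0 s.re p.2) := by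
  obtain ⟨hz1, hx, hz2⟩ := h𝒟
  rw [abs_eisTerm hz1 s (coprime_ne_zero hp)]
  exact bound_low (lt_trans one_pos hs) hη hz1 hx hz2 hyη hp

lemma summable_norm_eisTerm {s : ℂ} (hs : 1 < s.re) {z : ℂ}
    (h𝒟 : z ∈ fundamentalDomainSL2) :
    Summable (fun p : {p : ℤ × ℤ // Int.gcd p.1 p.2 = 1} =>
      ‖eisTerm z s p.val‖) := by
  set η' : ℝ := max 1 z.im with hη'
  have hη'0 : (0:ℝ) < η' := lt_of_lt_of_le one_pos (le_max_left _ _)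
  have hsum : Summable (fun p : ℤ × ℤ => (2*η')^s.re * (g0 s.re p.1 * g0 s.re p.2)) :=
    (summable_g0_prod hs).mul_left _
  refine Summable.of_nonneg_of_le (fun p => norm_nonneg _)
    (fun p => ?_) (hsum.comp_injective Subtype.val_injective)
  exact abs_eisTerm_le_low hs hη'0 h𝒟 (le_max_right _ _) p.2

noncomputable def eisM (σ : ℝ) : ℝ := ∑' p : ℤ × ℤ, g0 σ p.1 * g0 σ p.2

lemma eisM_nonneg (σ : ℝ) : 0 ≤ eisM σ :=
  tsum_nonneg fun p => mul_nonneg (g0_nonneg _ _) (g0_nonneg _ _)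

noncomputable def eisK (s : ℂ) (η : ℝ) : ℝ :=
  (2*η)^s.re * eisM s.re + ‖scatteringPhi s‖

lemma tsum_subtype_bound {s : ℂ} (hs : 1 < s.re) {η : ℝ} (hη : 0 < η)
    (h : {p : ℤ × ℤ // Int.gcd p.1 p.2 = 1} → ℝ)
    (hsum : Summable h)
    (hb : ∀ p, h p ≤ (2*η)^s.re * (g0 s.re p.val.1 * g0 s.re p.val.2)) :
    ∑' p, h p ≤ (2*η)^s.re * eisM s.re := by
  have h1 : ∑' p, h p ≤ ∑' p : ℤ × ℤ, (2*η)^s.re * (g0 s.re p.1 * g0 s.re p.2) := by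
    refine Summable.tsum_le_tsum_of_inj Subtype.val Subtype.val_injective
      (fun q _ => mul_nonneg (Real.rpow_nonneg (by linarith) _)
        (mul_nonneg (g0_nonneg _ _) (g0_nonneg _ _))) hb hsum
      ((summable_g0_prod hs).mul_left _)
  rw [tsum_mul_left] at h1
  exact h1

lemma abs_eisensteinTrunc_le {s : ℂ} (hs : 1 < s.re) {η : ℝ} (hη : 1 ≤ η) {z : ℂ}
    (h𝒟 : z ∈ fundamentalDomainSL2) :
    ‖eisensteinTrunc η z s‖ ≤ eisK s η := by
  have hη0 : (0:ℝ) < η := lt_of_lt_of_le one_pos hη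
  have hz1 : 0 < z.im := h𝒟.1
  have hnorm := summable_norm_eisTerm hs h𝒟
  have hphi : 0 ≤ ‖scatteringPhi s‖ := norm_nonneg _
  by_cases hcase : η < z.im
  · -- high region : z.im > η ≥ 1
    have hy1 : 1 ≤ z.im := le_of_lt (lt_of_le_of_lt hη hcase)
    set S := {p : ℤ × ℤ // Int.gcd p.1 p.2 = 1}
    have hT : Summable (fun p : S => eisTerm z s p.val) := by
      refine Summable.of_norm ?_
      simpa using hnorm
    have hb1g : Int.gcd (0:ℤ) (1:ℤ) = 1 := by decide
    have hb2g : Int.gcd (0:ℤ) (-1:ℤ) = 1 := by decide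
    set b₁ : S := ⟨((0:ℤ), (1:ℤ)), hb1g⟩ with hb₁
    set b₂ : S := ⟨((0:ℤ), (-1:ℤ)), hb2g⟩ with hb₂
    have hne12 : b₂ ≠ b₁ := by
      intro h
      have := congrArg (fun q : S => (q.val).2) h
      simp [hb₁, hb₂] at this
    have e1 : ∑' p : S, eisTerm z s p.val
        = eisTerm z s b₁.val + ∑' p : S, ite (p = b₁) 0 (eisTerm z s p.val) :=
      hT.tsum_eq_add_tsum_ite b₁
    have hf1 : Summable (fun p : S => ite (p = b₁) 0 (eisTerm z s p.val)) := by
      refine Summable.of_norm_bounded hnorm ?_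
      intro p
      by_cases hp : p = b₁ <;> simp [hp]
    have e2 : ∑' p : S, ite (p = b₁) 0 (eisTerm z s p.val)
        = eisTerm z s b₂.val
          + ∑' p : S, ite (p = b₂) 0 (ite (p = b₁) 0 (eisTerm z s p.val)) := by
      have := hf1.tsum_eq_add_tsum_ite b₂
      rwa [if_neg hne12] at this
    have hval1 : eisTerm z s b₁.val = ((z.im : ℂ)) ^ s := by
      simp [eisTerm, hb₁, Complex.one_cpow]
    have hval2 : eisTerm z s b₂.val = ((z.im : ℂ)) ^ s := by
      simp [eisTerm, hb₂, Complex.one_cpow]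
    set R := ∑' p : S, ite (p = b₂) 0 (ite (p = b₁) 0 (eisTerm z s p.val)) with hR
    have etrunc : eisensteinTrunc η z s
        = (1/2 : ℂ) * R - scatteringPhi s * ((z.im : ℂ)) ^ (1 - s) := by
      rw [eisensteinTrunc, if_pos hcase, eisensteinE_eq, e1, e2, hval1, hval2]
      ring
    -- bound |R|
    have hsumR : Summable (fun p : S =>
        ‖ite (p = b₂) 0 (ite (p = b₁) 0 (eisTerm z s p.val))‖) := by
      refine Summable.of_nonneg_of_le (fun p => norm_nonneg _) (fun p => ?_) hnorm
      by_cases hp2 : p = b₂ <;> by_cases hp1 : p = b₁ <;>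
        simp [hp1, hp2]
    have hRle : ‖R‖ ≤ (2*η)^s.re * eisM s.re := by
      have htri : ‖R‖ ≤ ∑' p : S,
          ‖ite (p = b₂) 0 (ite (p = b₁) 0 (eisTerm z s p.val))‖ := by
        rw [hR]
        exact norm_tsum_le_tsum_norm hsumR
      refine le_trans htri ?_
      refine tsum_subtype_bound hs hη0 _ hsumR ?_
      intro p
      by_cases hp2 : p = b₂
      · rw [if_pos hp2, norm_zero]
        exact mul_nonneg (Real.rpow_nonneg (by linarith) _)
          (mul_nonneg (g0_nonneg _ _) (g0_nonneg _ _))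
      · rw [if_neg hp2]
        by_cases hp1 : p = b₁
        · rw [if_pos hp1, norm_zero]
          exact mul_nonneg (Real.rpow_nonneg (by linarith) _)
            (mul_nonneg (g0_nonneg _ _) (g0_nonneg _ _))
        · rw [if_neg hp1,
            abs_eisTerm hz1 s (coprime_ne_zero p.2)]
          have hpc : p.val.1 ≠ 0 := by
            intro hc0
            have hg : Int.gcd p.val.1 p.val.2 = 1 := p.2
            rw [hc0] at hg
            rcases Int.natAbs_eq_iff.mp (by simpa [Int.gcd] using hg) with h | h
            · exact hp1 (Subtype.ext (Prod.ext hc0 (by simpa using h)))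
            · exact hp2 (Subtype.ext (Prod.ext hc0 (by simpa using h)))
          have h1 : z.im ^ s.re * (‖(p.val.1 : ℂ) * z + (p.val.2 : ℂ)‖ ^ 2) ^ (-s.re)
              ≤ g0 s.re p.val.1 * g0 s.re p.val.2 :=
            bound_high (lt_trans one_pos hs) hy1 h𝒟.2.1 hpc
          have hC1 : (1:ℝ) ≤ (2*η)^s.re := by
            rw [show (1:ℝ) = 1 ^ s.re from (Real.one_rpow _).symm]
            exact Real.rpow_le_rpow (by norm_num) (by linarith) (by linarith)
          nlinarith [mul_nonneg (g0_nonneg s.re p.val.1) (g0_nonneg s.re p.val.2)]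
    have habsy : ‖((z.im : ℂ)) ^ (1 - s)‖ ≤ 1 := by
      rw [Complex.norm_cpow_eq_rpow_re_of_pos hz1]
      exact Real.rpow_le_one_of_one_le_of_nonpos hy1 (by simp [Complex.sub_re]; linarith)
    calc ‖eisensteinTrunc η z s‖
        ≤ ‖(1/2 : ℂ) * R‖ + ‖scatteringPhi s * ((z.im : ℂ)) ^ (1 - s)‖ := by
          rw [etrunc]
          exact norm_sub_le _ _
      _ ≤ (2*η)^s.re * eisM s.re + ‖scatteringPhi s‖ := by
          rw [norm_mul, norm_mul]
          have h12 : ‖(1/2 : ℂ)‖ = 1/2 := by norm_num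
          rw [h12]
          have hRabs := norm_nonneg R
          have hyabs := norm_nonneg (((z.im : ℂ)) ^ (1 - s))
          have hC0 : (0:ℝ) ≤ (2*η)^s.re * eisM s.re :=
            mul_nonneg (Real.rpow_nonneg (by linarith) _) (eisM_nonneg _)
          nlinarith [mul_le_mul_of_nonneg_left habsy hphi]
      _ = eisK s η := rfl
  · -- low region : z.im ≤ η
    push_neg at hcase
    rw [eisensteinTrunc, if_neg (not_lt.mpr hcase), sub_zero, eisensteinE_eq]
    have h1 : ‖(1/2 : ℂ) * ∑' p : {p : ℤ × ℤ // Int.gcd p.1 p.2 = 1},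
        eisTerm z s p.val‖ ≤ (1/2) * ((2*η)^s.re * eisM s.re) := by
      rw [norm_mul]
      have h2 : ‖∑' p : {p : ℤ × ℤ // Int.gcd p.1 p.2 = 1}, eisTerm z s p.val‖
          ≤ (2*η)^s.re * eisM s.re := by
        have htri : ‖∑' p : {p : ℤ × ℤ // Int.gcd p.1 p.2 = 1}, eisTerm z s p.val‖
            ≤ ∑' p : {p : ℤ × ℤ // Int.gcd p.1 p.2 = 1}, ‖eisTerm z s p.val‖ := by
          refine le_trans (norm_tsum_le_tsum_norm ?_) ?_
          · simpa using hnorm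
          · simp
        refine le_trans htri (tsum_subtype_bound hs hη0 _ hnorm ?_)
        exact fun p => abs_eisTerm_le_low hs hη0 h𝒟 hcase p.2
      have h3 : ‖(1/2 : ℂ)‖ = 1/2 := by norm_num
      rw [h3]
      have := eisM_nonneg s.re
      nlinarith [norm_nonneg
        (∑' p : {p : ℤ × ℤ // Int.gcd p.1 p.2 = 1}, eisTerm z s p.val)]
    refine le_trans h1 ?_
    rw [eisK]
    have hM := eisM_nonneg s.re
    have hC : (0:ℝ) ≤ (2*η)^s.re := Real.rpow_nonneg (by linarith) _
    nlinarith

/-- For every `s` with `Re s > 1` and every `η ≥ 1`, the truncated Eisenstein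
series is square-integrable on the standard fundamental domain with respect to the hyperbolic
measure `y⁻² dx dy`. -/
theorem eisensteinTrunc_square_integrable (s : ℂ) (hs : 1 < s.re) (η : ℝ) (hη : 1 ≤ η) :
    ∫⁻ z in fundamentalDomainSL2,
        ENNReal.ofReal (‖eisensteinTrunc η z s‖ ^ 2 / z.im ^ 2) ∂volume < ⊤ := by
  set K : ℝ := eisK s η with hK
  have hK0 : 0 ≤ K := by
    rw [hK, eisK]
    have := eisM_nonneg s.re
    have h1 : (0:ℝ) ≤ (2*η)^s.re := Real.rpow_nonneg (by linarith) _
    have h2 : 0 ≤ ‖scatteringPhi s‖ := norm_nonneg _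
    nlinarith
  set g : ℂ → ENNReal := fun z => ENNReal.ofReal (K^2 / z.im^2) with hg
  have hgmeas : Measurable g := by
    apply Measurable.ennreal_ofReal
    exact measurable_const.div ((Complex.measurable_im).pow_const 2)
  have step1 : ∫⁻ z in fundamentalDomainSL2,
      ENNReal.ofReal (‖eisensteinTrunc η z s‖ ^ 2 / z.im ^ 2) ∂volume
      ≤ ∫⁻ z in fundamentalDomainSL2, g z ∂volume := by
    refine setLIntegral_mono hgmeas (fun z hz => ?_)
    refine ENNReal.ofReal_le_ofReal ?_
    have hz1 : 0 < z.im := hz.1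
    have hb := abs_eisensteinTrunc_le hs hη hz
    gcongr
  set A : Set ℂ := Complex.measurableEquivRealProd ⁻¹'
    (Set.Icc (-(1/2):ℝ) (1/2) ×ˢ Set.Ici (1/2:ℝ)) with hA
  have hsub : fundamentalDomainSL2 ⊆ A := by
    intro z hz
    obtain ⟨hz1, hx, hz2⟩ := hz
    have hxy : 1 ≤ z.re^2 + z.im^2 := by
      have h1 := Complex.sq_norm z
      rw [Complex.normSq_apply] at h1
      nlinarith [norm_nonneg z]
    have him : (1/2:ℝ) ≤ z.im := by
      rcases abs_le.mp hx with ⟨h1, h2⟩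
      nlinarith
    rcases abs_le.mp hx with ⟨h1, h2⟩
    exact ⟨⟨h1, h2⟩, him⟩
  have step2 : ∫⁻ z in fundamentalDomainSL2, g z ∂volume ≤ ∫⁻ z in A, g z ∂volume :=
    lintegral_mono_set hsub
  have hfin : ∫⁻ z in A, g z ∂volume < ⊤ := by
    set f : ℝ × ℝ → ENNReal := fun p => ENNReal.ofReal (K^2 / p.2^2) with hf
    have hfmeas : Measurable f := by
      apply Measurable.ennreal_ofReal
      exact measurable_const.div (measurable_snd.pow_const 2)
    have e0 : ∫⁻ z in A, g z ∂volume
        = ∫⁻ p in Set.Icc (-(1/2):ℝ) (1/2) ×ˢ Set.Ici (1/2:ℝ), f p ∂volume := by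
      rw [hA]
      exact Complex.volume_preserving_equiv_real_prod.setLIntegral_comp_preimage_emb
        Complex.measurableEquivRealProd.measurableEmbedding f _
    have hint : IntegrableOn (fun y : ℝ => K^2 / y^2) (Set.Ici (1/2:ℝ)) volume := by
      rw [integrableOn_Ici_iff_integrableOn_Ioi]
      have h1 : IntegrableOn (fun y : ℝ => y ^ (-2:ℝ)) (Set.Ioi (1/2:ℝ)) :=
        integrableOn_Ioi_rpow_of_lt (by norm_num) (by norm_num)
      refine MeasureTheory.IntegrableOn.congr_fun (h1.const_mul (K^2))
        (fun y hy => ?_) measurableSet_Ioi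
      have hy0 : (0:ℝ) < y := lt_trans (by norm_num) hy
      rw [show ((-2:ℝ)) = -((2:ℕ):ℝ) by norm_num, Real.rpow_neg hy0.le,
        Real.rpow_natCast, div_eq_mul_inv]
    have hI : ∫⁻ y in Set.Ici (1/2:ℝ), ENNReal.ofReal (K^2 / y^2) ∂volume < ⊤ :=
      hint.lintegral_lt_top
    rw [e0, Measure.volume_eq_prod, ← Measure.prod_restrict,
      MeasureTheory.lintegral_prod f hfmeas.aemeasurable]
    simp only [hf]
    rw [lintegral_const, Measure.restrict_apply_univ]
    refine ENNReal.mul_lt_top hI ?_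
    rw [Real.volume_Icc]
    exact ENNReal.ofReal_lt_top
  exact lt_of_le_of_lt (le_trans step1 step2) hfin
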